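/- Let 1 ≤ m = n−2, and let 0 ≤ p ≤ m and q ≥ 0 with p + q = n−1. Then Sylv^{p,q}(A,B) = (−1)^{p+1} · C(m,p) · f, where C(m,p) is the binomial coefficient. -/

import Mathlib

open Polynomial Finset

noncomputable section

variable {F : Type*} [Field F]

/-- Coefficient of a polynomial at an integer index (0 for negative indices). -/
def coeffZ (f : F[X]) (z : ℤ) : F := if 0 ≤ z then f.coeff z.toNat else 0

/-- The `(m+n-2k) × (m+n-2k)` matrix `M_k(f,g)` whose determinant is the
`k`-th subresultant of `f` (of degree `m`) and `g` (of degree `n`). -/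
def sresM (m n k : ℕ) (f g : F[X]) :
    Matrix (Fin (m + n - 2*k)) (Fin (m + n - 2*k)) F[X] := fun i j =>
  if (j : ℕ) = m + n - 2*k - 1 then
    if (i : ℕ) < n - k then X ^ (n - k - 1 - (i : ℕ)) * f
    else X ^ (m - k - 1 - ((i : ℕ) - (n - k))) * g
  else
    if (i : ℕ) < n - k then C (coeffZ f ((m : ℤ) + (i : ℕ) - (j : ℕ)))
    else C (coeffZ g ((k : ℤ) + (i : ℕ) - (j : ℕ)))

/-- `M_k(f,g)` with the last column replaced by `(x^{n-k-1},…,x^0,0,…,0)ᵀ`. -/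
def sresMF (m n k : ℕ) (f g : F[X]) :
    Matrix (Fin (m + n - 2*k)) (Fin (m + n - 2*k)) F[X] := fun i j =>
  if (j : ℕ) = m + n - 2*k - 1 then
    if (i : ℕ) < n - k then X ^ (n - k - 1 - (i : ℕ)) else 0
  else sresM m n k f g i j

/-- `M_k(f,g)` with the last column replaced by `(0,…,0,x^{m-k-1},…,x^0)ᵀ`. -/
def sresMG (m n k : ℕ) (f g : F[X]) :
    Matrix (Fin (m + n - 2*k)) (Fin (m + n - 2*k)) F[X] := fun i j =>
  if (j : ℕ) = m + n - 2*k - 1 then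
    if (i : ℕ) < n - k then 0 else X ^ (m - k - 1 - ((i : ℕ) - (n - k)))
  else sresM m n k f g i j

/-- The `k`-th subresultant `Sres_k(f,g)` w.r.t. degrees `m`, `n`. -/
def Sres (m n k : ℕ) (f g : F[X]) : F[X] := (sresM m n k f g).det

/-- The polynomial `F_k(f,g)` w.r.t. degrees `m`, `n`. -/
def Fk (m n k : ℕ) (f g : F[X]) : F[X] := (sresMF m n k f g).det

/-- The polynomial `G_k(f,g)` w.r.t. degrees `m`, `n`. -/
def Gk (m n k : ℕ) (f g : F[X]) : F[X] := (sresMG m n k f g).det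

/-- `R(Y,Z) = ∏_{y ∈ Y, z ∈ Z} (y - z)`. -/
def Rp {ι κ : Type*} (a : ι → F) (b : κ → F) (S : Finset ι) (T : Finset κ) : F :=
  ∏ i ∈ S, ∏ j ∈ T, (a i - b j)

/-- `R(x,Y) = ∏_{y ∈ Y} (x - y)` as a polynomial. -/
def RX {ι : Type*} (a : ι → F) (S : Finset ι) : F[X] :=
  ∏ i ∈ S, (X - C (a i))

/-- Sylvester's double sum `Sylv^{p,q}(A,B)`. -/
def sylv {m n : ℕ} (A : Fin m → F) (B : Fin n → F) (p q : ℕ) : F[X] :=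
  ∑ S ∈ (univ : Finset (Fin m)).powersetCard p,
    ∑ T ∈ (univ : Finset (Fin n)).powersetCard q,
      C ((Rp A B S T * Rp A B Sᶜ Tᶜ) / (Rp A A S Sᶜ * Rp B B T Tᶜ)) *
        (RX A S * RX B T)

end

section AuxSylvHelpers

variable {F : Type*} [Field F]

lemma prod_flip {ι : Type*} (s : Finset ι) (u w : ι → F) :
    ∏ i ∈ s, (u i - w i) = (-1 : F) ^ s.card * ∏ i ∈ s, (w i - u i) := by
  rw [← Finset.prod_const (-1 : F), ← Finset.prod_mul_distrib]
  exact Finset.prod_congr rfl fun i _ => by ring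

lemma rx_monic {ι : Type*} (a : ι → F) (S : Finset ι) : (RX a S).Monic :=
  monic_prod_of_monic _ _ fun i _ => monic_X_sub_C (a i)

lemma rx_natDegree {ι : Type*} (a : ι → F) (S : Finset ι) : (RX a S).natDegree = S.card := by
  rw [RX, natDegree_prod_of_monic _ _ fun i _ => monic_X_sub_C (a i)]
  simp [natDegree_X_sub_C]

lemma rx_eval {ι : Type*} (a : ι → F) (S : Finset ι) (x : F) :
    (RX a S).eval x = ∏ i ∈ S, (x - a i) := by
  simp [RX, eval_prod]

lemma sum_powersetCard_split {ι M : Type*} [DecidableEq ι] [AddCommMonoid M] {s : Finset ι}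
    {c : ι} (hc : c ∈ s) (k : ℕ) (f : Finset ι → M) :
    ∑ T ∈ s.powersetCard (k + 1), f T
      = ∑ T ∈ (s.erase c).powersetCard (k + 1), f T
        + ∑ T ∈ (s.erase c).powersetCard k, f (insert c T) := by
  conv_lhs => rw [← Finset.insert_erase hc,
    Finset.powersetCard_succ_insert (Finset.notMem_erase c s)]
  rw [Finset.sum_union, Finset.sum_image]
  · intro T hT T' hT' h
    rw [Finset.mem_coe, Finset.mem_powersetCard] at hT hT'
    have hcT : c ∉ T := fun hx => (Finset.mem_erase.1 (hT.1 hx)).1 rfl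
    have hcT' : c ∉ T' := fun hx => (Finset.mem_erase.1 (hT'.1 hx)).1 rfl
    rw [← Finset.erase_insert hcT, h, Finset.erase_insert hcT']
  · rw [Finset.disjoint_left]
    intro T hT hT2
    rw [Finset.mem_powersetCard] at hT
    obtain ⟨T', _, rfl⟩ := Finset.mem_image.1 hT2
    exact (Finset.mem_erase.1 (hT.1 (Finset.mem_insert_self c T'))).1 rfl

lemma lagrange_coeff_top {ι : Type*} [DecidableEq ι] {s : Finset ι} {v : ι → F}
    (hinj : Set.InjOn v s) {g : F[X]} (hdeg : g.degree < s.card) :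
    g.coeff (s.card - 1) = ∑ i ∈ s, g.eval (v i) / ∏ j ∈ s.erase i, (v i - v j) := by
  conv_lhs => rw [Lagrange.eq_interpolate hinj hdeg]
  rw [Lagrange.interpolate_apply, finset_sum_coeff]
  refine Finset.sum_congr rfl fun i hi => ?_
  have hb : Lagrange.basis s v i
      = C (∏ j ∈ s.erase i, (v i - v j)⁻¹) * ∏ j ∈ s.erase i, (X - C (v j)) := by
    rw [Lagrange.basis, map_prod, ← Finset.prod_mul_distrib]
    rfl
  have hmon : (∏ j ∈ s.erase i, (X - C (v j))).Monic :=
    monic_prod_of_monic _ _ fun j _ => monic_X_sub_C (v j)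
  have hnd : (∏ j ∈ s.erase i, (X - C (v j))).natDegree = s.card - 1 := by
    rw [natDegree_prod_of_monic _ _ fun j _ => monic_X_sub_C (v j)]
    simp [Finset.card_erase_of_mem hi]
  have hco : (C (∏ j ∈ s.erase i, (v i - v j)⁻¹) * ∏ j ∈ s.erase i, (X - C (v j))).coeff
      (s.card - 1) = ∏ j ∈ s.erase i, (v i - v j)⁻¹ := by
    rw [coeff_C_mul, ← hnd, hmon.coeff_natDegree, mul_one]
  rw [hb, coeff_C_mul, hco, Finset.prod_inv_distrib, div_eq_mul_inv]

/-- The key exchange identity. -/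
lemma key_lemma {ι : Type*} [DecidableEq ι] (g : F[X]) (hg : g.Monic) (hr : Multiset F) :
    ∀ (s : Finset ι) (v : ι → F), Set.InjOn v s →
      s.card = g.natDegree + Multiset.card hr + 1 →
    (∑ T ∈ s.powersetCard (Multiset.card hr + 1),
      (∏ i ∈ T, g.eval (v i)) * (∏ i ∈ s \ T, (hr.map (fun γ => v i - γ)).prod)
        / (∏ i ∈ T, ∏ j ∈ s \ T, (v i - v j)))
    = (hr.map (fun γ => (-1 : F) ^ g.natDegree * g.eval γ)).prod := by
  classical
  induction hr using Multiset.induction_on with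
  | empty =>
    intro s v hinj hcard
    simp only [Multiset.card_zero, zero_add, Multiset.map_zero, Multiset.prod_zero] at hcard ⊢
    have hdeg : g.degree < (s.card : WithBot ℕ) :=
      degree_le_natDegree.trans_lt (by exact_mod_cast Nat.lt_of_lt_of_le (by omega) le_rfl)
    calc ∑ T ∈ s.powersetCard 1,
          (∏ i ∈ T, g.eval (v i)) * (∏ i ∈ s \ T, (Multiset.map (fun γ => v i - γ) 0).prod)
            / (∏ i ∈ T, ∏ j ∈ s \ T, (v i - v j))
        = ∑ i ∈ s, g.eval (v i) / ∏ j ∈ s.erase i, (v i - v j) := by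
          rw [Finset.powersetCard_one, Finset.sum_map]
          refine Finset.sum_congr rfl fun i hi => ?_
          simp [Finset.sdiff_singleton_eq_erase]
      _ = g.coeff (s.card - 1) := (lagrange_coeff_top hinj hdeg).symm
      _ = 1 := by
          have : s.card - 1 = g.natDegree := by omega
          rw [this, hg.coeff_natDegree]
  | cons γ m₁ IH =>
    intro s v hinj hcard
    simp only [Multiset.card_cons] at hcard ⊢
    set p := g.natDegree with hp
    set r₁ := Multiset.card m₁ with hr₁
    have hcard' : s.card = p + r₁ + 2 := by omega
    have hmain : (∑ T ∈ s.powersetCard (r₁ + 1 + 1),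
        C ((∏ i ∈ T, g.eval (v i)) * (∏ i ∈ s \ T, (m₁.map (fun δ => v i - δ)).prod)
          / (∏ i ∈ T, ∏ j ∈ s \ T, (v i - v j))) * ∏ i ∈ s \ T, (C (v i) - X))
        = C ((-1 : F) ^ p * (m₁.map (fun δ => (-1 : F) ^ p * g.eval δ)).prod) * g := by
      rw [← sub_eq_zero]
      apply Polynomial.eq_zero_of_natDegree_lt_card_of_eval_eq_zero' _ (s.image v)
      · -- vanishing at all nodes
        intro y hy
        obtain ⟨c, hc, rfl⟩ := Finset.mem_image.1 hy
        rw [eval_sub, sub_eq_zero, eval_finset_sum]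
        have hterm : ∀ T ∈ s.powersetCard (r₁ + 1 + 1),
            Polynomial.eval (v c) (C ((∏ i ∈ T, g.eval (v i)) *
                (∏ i ∈ s \ T, (m₁.map (fun δ => v i - δ)).prod)
                / (∏ i ∈ T, ∏ j ∈ s \ T, (v i - v j))) * ∏ i ∈ s \ T, (C (v i) - X))
            = ((∏ i ∈ T, g.eval (v i)) * (∏ i ∈ s \ T, (m₁.map (fun δ => v i - δ)).prod)
                / (∏ i ∈ T, ∏ j ∈ s \ T, (v i - v j))) * ∏ i ∈ s \ T, (v i - v c) := by
          intro T _
          rw [eval_mul, eval_C, eval_prod]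
          simp only [eval_sub, eval_C, eval_X]
        rw [Finset.sum_congr rfl hterm, sum_powersetCard_split hc (r₁ + 1)]
        have h1 : ∀ T ∈ (s.erase c).powersetCard (r₁ + 1 + 1),
            ((∏ i ∈ T, g.eval (v i)) * (∏ i ∈ s \ T, (m₁.map (fun δ => v i - δ)).prod)
              / (∏ i ∈ T, ∏ j ∈ s \ T, (v i - v j))) * ∏ i ∈ s \ T, (v i - v c) = 0 := by
          intro T hT
          rw [Finset.mem_powersetCard] at hT
          have hcmem : c ∈ s \ T := Finset.mem_sdiff.2
            ⟨hc, fun hx => (Finset.mem_erase.1 (hT.1 hx)).1 rfl⟩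
          rw [Finset.prod_eq_zero (f := fun i => v i - v c) hcmem (sub_self (v c)), mul_zero]
        rw [Finset.sum_congr rfl h1, Finset.sum_const, smul_zero, zero_add]
        have h2 : ∀ T ∈ (s.erase c).powersetCard (r₁ + 1),
            ((∏ i ∈ insert c T, g.eval (v i)) *
              (∏ i ∈ s \ insert c T, (m₁.map (fun δ => v i - δ)).prod)
              / (∏ i ∈ insert c T, ∏ j ∈ s \ insert c T, (v i - v j))) *
              ∏ i ∈ s \ insert c T, (v i - v c)
            = ((-1 : F) ^ p * g.eval (v c)) *
              ((∏ i ∈ T, g.eval (v i)) *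
                (∏ i ∈ (s.erase c) \ T, (m₁.map (fun δ => v i - δ)).prod)
                / (∏ i ∈ T, ∏ j ∈ (s.erase c) \ T, (v i - v j))) := by
          intro T hT
          rw [Finset.mem_powersetCard] at hT
          have hcT : c ∉ T := fun hx => (Finset.mem_erase.1 (hT.1 hx)).1 rfl
          have hsd : s \ insert c T = (s.erase c) \ T := by
            ext x
            simp only [Finset.mem_sdiff, Finset.mem_insert, Finset.mem_erase]
            tauto
          have hDcard : ((s.erase c) \ T).card = p := by
            rw [Finset.card_sdiff_of_subset hT.1, Finset.card_erase_of_mem hc, hT.2]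
            omega
          have hW : (∏ j ∈ (s.erase c) \ T, (v c - v j)) ≠ 0 := by
            rw [Finset.prod_ne_zero_iff]
            intro j hj
            have hj' := Finset.mem_sdiff.1 hj
            have hjs : j ∈ s := (Finset.erase_subset c s) hj'.1
            have hjc : j ≠ c := (Finset.mem_erase.1 hj'.1).1
            exact sub_ne_zero_of_ne fun h => hjc (hinj hjs hc h.symm)
          rw [hsd, Finset.prod_insert hcT, Finset.prod_insert hcT,
            prod_flip ((s.erase c) \ T) v (fun _ => v c), hDcard]
          rcases eq_or_ne (∏ i ∈ T, ∏ j ∈ (s.erase c) \ T, (v i - v j)) 0 with hRT | hRT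
          · rw [hRT]
            simp
          · field_simp
        rw [Finset.sum_congr rfl h2, ← Finset.mul_sum,
          IH (s.erase c) v (hinj.mono (by exact_mod_cast Finset.erase_subset c s))
            (by rw [Finset.card_erase_of_mem hc]; omega),
          eval_mul, eval_C]
        ring
      · -- degree bound
        have hLdeg : (∑ T ∈ s.powersetCard (r₁ + 1 + 1),
            C ((∏ i ∈ T, g.eval (v i)) * (∏ i ∈ s \ T, (m₁.map (fun δ => v i - δ)).prod)
              / (∏ i ∈ T, ∏ j ∈ s \ T, (v i - v j))) * ∏ i ∈ s \ T, (C (v i) - X)).natDegree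
            ≤ p := by
          apply Polynomial.natDegree_sum_le_of_forall_le
          intro T hT
          rw [Finset.mem_powersetCard] at hT
          refine Polynomial.natDegree_mul_le.trans ?_
          rw [Polynomial.natDegree_C, zero_add]
          have hone : ∀ i ∈ s \ T, (C (v i) - X).natDegree ≤ 1 :=
            fun i _ => (Polynomial.natDegree_sub_le _ _).trans (by simp)
          have hsum : ∑ i ∈ s \ T, (C (v i) - X).natDegree ≤ (s \ T).card := by
            have := Finset.sum_le_sum hone
            simpa using this
          have hcardT : (s \ T).card = p := by
            rw [Finset.card_sdiff_of_subset hT.1, hT.2]; omega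
          exact (Polynomial.natDegree_prod_le _ _).trans (hsum.trans_eq hcardT)
        have hRdeg : (C ((-1 : F) ^ p * (m₁.map (fun δ => (-1 : F) ^ p * g.eval δ)).prod)
            * g).natDegree ≤ p :=
          Polynomial.natDegree_mul_le.trans
            (by rw [Polynomial.natDegree_C, zero_add])
        have hcardim : (s.image v).card = s.card := Finset.card_image_of_injOn hinj
        apply lt_of_le_of_lt ((Polynomial.natDegree_sub_le _ _).trans (max_le hLdeg hRdeg))
        rw [hcardim]
        omega
    -- now evaluate the polynomial identity at γ
    have hev := congrArg (Polynomial.eval γ) hmain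
    rw [eval_finset_sum, eval_mul, eval_C] at hev
    calc ∑ T ∈ s.powersetCard (r₁ + 1 + 1),
          (∏ i ∈ T, g.eval (v i)) * (∏ i ∈ s \ T, ((γ ::ₘ m₁).map (fun δ => v i - δ)).prod)
            / (∏ i ∈ T, ∏ j ∈ s \ T, (v i - v j))
        = ∑ T ∈ s.powersetCard (r₁ + 1 + 1), Polynomial.eval γ
            (C ((∏ i ∈ T, g.eval (v i)) * (∏ i ∈ s \ T, (m₁.map (fun δ => v i - δ)).prod)
              / (∏ i ∈ T, ∏ j ∈ s \ T, (v i - v j))) * ∏ i ∈ s \ T, (C (v i) - X)) := by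
          refine Finset.sum_congr rfl fun T hT => ?_
          rw [eval_mul, eval_C, eval_prod]
          simp only [eval_sub, eval_C, eval_X, Multiset.map_cons, Multiset.prod_cons]
          rw [Finset.prod_mul_distrib]
          ring
      _ = ((γ ::ₘ m₁).map (fun δ => (-1 : F) ^ p * g.eval δ)).prod := by
          rw [hev]
          simp only [Multiset.map_cons, Multiset.prod_cons]
          ring

lemma hscalar_step (a b u ps cs dt w e1 e2 e3 : F) (hw : w ≠ 0) (h12 : e1 * e2 = -e3) :
    (a * (u * b)) / (cs * (dt * w)) * (e1 * ps * (e2 * w))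
      = -(e3 * (ps * u)) * (a * b / (cs * dt)) := by
  have h1 : (a * (u * b)) / (cs * (dt * w)) * (e1 * ps * (e2 * w))
      = (a * (u * b)) / (cs * dt) * (e1 * ps * e2) * (w / w) := by
    rw [show cs * (dt * w) = cs * dt * w from by ring, ← div_div]
    ring
  rw [h1, div_self hw, mul_one]
  linear_combination (a * u * b * ps / (cs * dt)) * h12

/-- Stage A : the inner double sum evaluates to `(-1)^p`. -/
lemma stageA {m : ℕ} (A : Fin m → F) (B : Fin (m + 2) → F)
    (hA : Function.Injective A) (hB : Function.Injective B)
    (p : ℕ) (hp : p ≤ m) (j : Fin (m + 2)) (S : Finset (Fin m)) (hS : S.card = p) :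
    ∑ T ∈ ((univ : Finset (Fin (m + 2))).erase j).powersetCard (m - p + 1),
      (Rp A B S T * Rp A B Sᶜ (((univ : Finset (Fin (m + 2))).erase j) \ T)) /
        (Rp A A S Sᶜ * Rp B B T (((univ : Finset (Fin (m + 2))).erase j) \ T))
      = (-1 : F) ^ p := by
  classical
  have hgmon : (RX A S).Monic := rx_monic A S
  have hgdeg : (RX A S).natDegree = p := by rw [rx_natDegree, hS]
  have hSc : Sᶜ.card = m - p := by
    rw [Finset.card_compl, hS, Fintype.card_fin]
  have hhrcard : Multiset.card (Sᶜ.1.map A) = m - p := by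
    rw [Multiset.card_map]
    exact hSc
  have hJcard : ((univ : Finset (Fin (m + 2))).erase j).card = m + 1 := by
    rw [Finset.card_erase_of_mem (Finset.mem_univ j), Finset.card_univ, Fintype.card_fin]
    omega
  have hcS : Rp A A S Sᶜ ≠ 0 := by
    rw [Rp, Finset.prod_ne_zero_iff]
    intro i hi
    rw [Finset.prod_ne_zero_iff]
    intro k hk
    have hik : i ≠ k := fun h => (Finset.mem_compl.1 hk) (h ▸ hi)
    exact sub_ne_zero_of_ne fun h => hik (hA h)
  have hkey := key_lemma (ι := Fin (m + 2)) (RX A S) hgmon (Sᶜ.1.map A)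
    ((univ : Finset (Fin (m + 2))).erase j) B (hB.injOn) (by rw [hJcard, hgdeg, hhrcard]; omega)
  rw [hhrcard, hgdeg] at hkey
  have hKR : ((Sᶜ.1.map A).map (fun γ => (-1 : F) ^ p * (RX A S).eval γ)).prod
      = Rp A A S Sᶜ := by
    rw [Multiset.map_map, Rp, Finset.prod_comm]
    rw [show ∏ y ∈ Sᶜ, ∏ x ∈ S, (A x - A y)
        = ∏ y ∈ Sᶜ, ((-1 : F) ^ p * (RX A S).eval (A y)) from
      Finset.prod_congr rfl fun y _ => by
        rw [prod_flip S A (fun _ => A y), hS, rx_eval]]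
    rw [Finset.prod_eq_multiset_prod]
    rfl
  have hTrans : ∀ T ∈ ((univ : Finset (Fin (m + 2))).erase j).powersetCard (m - p + 1),
      (Rp A B S T * Rp A B Sᶜ (((univ : Finset (Fin (m + 2))).erase j) \ T)) /
        (Rp A A S Sᶜ * Rp B B T (((univ : Finset (Fin (m + 2))).erase j) \ T))
      = (((-1 : F) ^ p) ^ (m - p + 1) * ((-1 : F) ^ (m - p)) ^ p / Rp A A S Sᶜ) *
        ((∏ k ∈ T, (RX A S).eval (B k)) *
          (∏ k ∈ ((univ : Finset (Fin (m + 2))).erase j) \ T, ((Sᶜ.1.map A).map (fun γ => B k - γ)).prod)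
          / (∏ k ∈ T, ∏ l ∈ ((univ : Finset (Fin (m + 2))).erase j) \ T, (B k - B l))) := by
    intro T hT
    obtain ⟨hTJ, hTcard⟩ := Finset.mem_powersetCard.1 hT
    have hJTcard : ((((univ : Finset (Fin (m + 2))).erase j)) \ T).card = p := by
      rw [Finset.card_sdiff_of_subset hTJ, hJcard, hTcard]
      omega
    have h1 : Rp A B S T = ((-1 : F) ^ p) ^ (m - p + 1) * ∏ k ∈ T, (RX A S).eval (B k) := by
      rw [Rp, Finset.prod_comm, ← hTcard, ← Finset.prod_const, ← Finset.prod_mul_distrib]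
      refine Finset.prod_congr rfl fun k _ => ?_
      rw [prod_flip S A (fun _ => B k), hS, rx_eval]
    have h2 : Rp A B Sᶜ (((univ : Finset (Fin (m + 2))).erase j) \ T)
        = ((-1 : F) ^ (m - p)) ^ p *
          ∏ k ∈ ((univ : Finset (Fin (m + 2))).erase j) \ T,
            ((Sᶜ.1.map A).map (fun γ => B k - γ)).prod := by
      rw [Rp, Finset.prod_comm,
        show (∏ y ∈ ((univ : Finset (Fin (m + 2))).erase j) \ T, ∏ x ∈ Sᶜ, (A x - B y))
            = ∏ y ∈ ((univ : Finset (Fin (m + 2))).erase j) \ T,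
              ((-1 : F) ^ (m - p) * ((Sᶜ.1.map A).map (fun γ => B y - γ)).prod) from
          Finset.prod_congr rfl fun k _ => by
            have hmap : ((Sᶜ.1.map A).map (fun γ => B k - γ)).prod = ∏ i ∈ Sᶜ, (B k - A i) := by
              rw [Multiset.map_map, Finset.prod_eq_multiset_prod]
              rfl
            rw [prod_flip Sᶜ A (fun _ => B k), hSc, hmap],
        Finset.prod_mul_distrib, Finset.prod_const, hJTcard]
    rw [h1, h2]
    have hRpBB : Rp B B T (((univ : Finset (Fin (m + 2))).erase j) \ T)
        = ∏ k ∈ T, ∏ l ∈ ((univ : Finset (Fin (m + 2))).erase j) \ T, (B k - B l) := rfl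
    rw [← hRpBB]
    ring
  rw [Finset.sum_congr rfl hTrans, ← Finset.mul_sum, hkey, hKR,
    div_mul_cancel₀ _ hcS, ← pow_mul, ← pow_mul, ← pow_add,
    show p * (m - p + 1) + (m - p) * p = 2 * ((m - p) * p) + p from by ring,
    pow_add, pow_mul, neg_one_sq, one_pow, one_mul]

/-- Stage B : evaluation of the inner `T`-sum at `B j`. -/
lemma stageB {m : ℕ} (A : Fin m → F) (B : Fin (m + 2) → F)
    (hA : Function.Injective A) (hB : Function.Injective B)
    (p q : ℕ) (hp : p ≤ m) (hpq : p + q = m + 1) (j : Fin (m + 2))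
    (S : Finset (Fin m)) (hS : S.card = p) :
    Polynomial.eval (B j) (∑ T ∈ (univ : Finset (Fin (m + 2))).powersetCard q,
        C ((Rp A B S T * Rp A B Sᶜ Tᶜ) / (Rp A A S Sᶜ * Rp B B T Tᶜ)) * (RX A S * RX B T))
      = (-1 : F) ^ (p + 1) * (RX A (univ : Finset (Fin m))).eval (B j) := by
  classical
  have hq1 : q = (m - p) + 1 := by omega
  rw [eval_finset_sum, hq1, sum_powersetCard_split (Finset.mem_univ j) (m - p)]
  have hz : ∀ T ∈ ((univ : Finset (Fin (m + 2))).erase j).powersetCard (m - p),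
      Polynomial.eval (B j) (C ((Rp A B S (insert j T) * Rp A B Sᶜ (insert j T)ᶜ) /
          (Rp A A S Sᶜ * Rp B B (insert j T) (insert j T)ᶜ)) *
        (RX A S * RX B (insert j T))) = 0 := by
    intro T hT
    rw [eval_mul, eval_mul]
    have h0 : (RX B (insert j T)).eval (B j) = 0 := by
      rw [RX, eval_prod]
      exact Finset.prod_eq_zero (Finset.mem_insert_self j T) (by simp)
    rw [h0, mul_zero, mul_zero]
  rw [Finset.sum_congr rfl hz, Finset.sum_const, smul_zero, add_zero]
  have hterm : ∀ T ∈ ((univ : Finset (Fin (m + 2))).erase j).powersetCard (m - p + 1),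
      Polynomial.eval (B j)
        (C ((Rp A B S T * Rp A B Sᶜ Tᶜ) / (Rp A A S Sᶜ * Rp B B T Tᶜ)) * (RX A S * RX B T))
      = (-((RX A (univ : Finset (Fin m))).eval (B j))) *
        ((Rp A B S T * Rp A B Sᶜ (((univ : Finset (Fin (m + 2))).erase j) \ T)) /
          (Rp A A S Sᶜ * Rp B B T (((univ : Finset (Fin (m + 2))).erase j) \ T))) := by
    intro T hT
    obtain ⟨hTJ, hTcard⟩ := Finset.mem_powersetCard.1 hT
    have hjT : j ∉ T := fun h => (Finset.mem_erase.1 (hTJ h)).1 rfl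
    have hjJT : j ∉ ((univ : Finset (Fin (m + 2))).erase j) \ T :=
      fun h => (Finset.mem_erase.1 (Finset.mem_sdiff.1 h).1).1 rfl
    have hTc : Tᶜ = insert j (((univ : Finset (Fin (m + 2))).erase j) \ T) := by
      ext k
      by_cases hk : k = j
      · subst hk
        simp [hjT]
      · simp [Finset.mem_compl, Finset.mem_insert, Finset.mem_sdiff, Finset.mem_erase, hk]
    have hBB : Rp B B T Tᶜ
        = Rp B B T (((univ : Finset (Fin (m + 2))).erase j) \ T) * ∏ k ∈ T, (B k - B j) := by
      rw [Rp, Rp, hTc,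
        Finset.prod_congr rfl (fun k (_ : k ∈ T) => Finset.prod_insert hjJT),
        Finset.prod_mul_distrib]
      exact mul_comm _ _
    have hAB : Rp A B Sᶜ Tᶜ
        = (∏ i ∈ Sᶜ, (A i - B j)) *
          Rp A B Sᶜ (((univ : Finset (Fin (m + 2))).erase j) \ T) := by
      rw [Rp, Rp, hTc,
        Finset.prod_congr rfl (fun i (_ : i ∈ Sᶜ) => Finset.prod_insert hjJT),
        Finset.prod_mul_distrib]
    have hRXS : (RX A S).eval (B j) = (-1 : F) ^ p * ∏ i ∈ S, (A i - B j) := by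
      rw [rx_eval, prod_flip S (fun _ => B j) A, hS]
    have hRXT : (RX B T).eval (B j) = (-1 : F) ^ (m - p + 1) * ∏ k ∈ T, (B k - B j) := by
      rw [rx_eval, prod_flip T (fun _ => B j) B, hTcard]
    have hfβ : (RX A (univ : Finset (Fin m))).eval (B j)
        = (-1 : F) ^ m * ((∏ i ∈ S, (A i - B j)) * ∏ i ∈ Sᶜ, (A i - B j)) := by
      rw [rx_eval, prod_flip univ (fun _ => B j) A, Finset.card_univ, Fintype.card_fin,
        Finset.prod_mul_prod_compl]
    have hw : (∏ k ∈ T, (B k - B j)) ≠ 0 := by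
      rw [Finset.prod_ne_zero_iff]
      intro k hk
      have hkj : k ≠ j := fun h => (Finset.mem_erase.1 (hTJ hk)).1 h
      exact sub_ne_zero_of_ne fun h => hkj (hB h)
    have hsign : (-1 : F) ^ p * (-1 : F) ^ (m - p + 1) = -(-1 : F) ^ m := by
      rw [← pow_add, show p + (m - p + 1) = m + 1 from by omega, pow_succ]
      ring
    rw [eval_mul, eval_mul, eval_C, hRXS, hRXT, hBB, hAB, hfβ]
    exact hscalar_step _ _ _ _ _ _ _ _ _ _ hw hsign
  rw [Finset.sum_congr rfl hterm, ← Finset.mul_sum, stageA A B hA hB p hp j S hS, pow_succ]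
  ring

end AuxSylvHelpers

/-- for `1 ≤ m = n − 2`, `0 ≤ p ≤ m` and `p + q = n − 1 = m + 1`,
`Sylv^{p,q}(A,B) = (−1)^{p+1} C(m,p) f`. Here `B` has length `n = m + 2`. -/
theorem sylvester_double_sum_n_minus_one {F : Type*} [Field F] {m : ℕ} (hm : 1 ≤ m)
    (A : Fin m → F) (B : Fin (m + 2) → F)
    (hA : Function.Injective A) (hB : Function.Injective B)
    (f : Polynomial F) (hf : f = RX A Finset.univ)
    (p q : ℕ) (hp : p ≤ m) (hpq : p + q = m + 1) :
    sylv A B p q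
      = (-1 : Polynomial F) ^ (p + 1) * (m.choose p : Polynomial F) * f := by
  classical
  have heval : ∀ j : Fin (m + 2), (sylv A B p q).eval (B j)
      = (-1 : F) ^ (p + 1) * (m.choose p : F) * (RX A (univ : Finset (Fin m))).eval (B j) := by
    intro j
    rw [sylv, eval_finset_sum,
      Finset.sum_congr rfl (fun S hS =>
        stageB A B hA hB p q hp hpq j S (Finset.mem_powersetCard.1 hS).2),
      Finset.sum_const, Finset.card_powersetCard, Finset.card_univ, Fintype.card_fin,
      nsmul_eq_mul]
    ring
  have hdeg1 : (sylv A B p q).natDegree ≤ m + 1 := by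
    rw [sylv]
    apply Polynomial.natDegree_sum_le_of_forall_le
    intro S hS
    apply Polynomial.natDegree_sum_le_of_forall_le
    intro T hT
    refine Polynomial.natDegree_mul_le.trans ?_
    rw [Polynomial.natDegree_C, zero_add]
    refine Polynomial.natDegree_mul_le.trans ?_
    rw [rx_natDegree, rx_natDegree, (Finset.mem_powersetCard.1 hS).2,
      (Finset.mem_powersetCard.1 hT).2]
    omega
  have hdeg2 : ((-1 : Polynomial F) ^ (p + 1) * (m.choose p : Polynomial F) * f).natDegree
      ≤ m + 1 := by
    refine Polynomial.natDegree_mul_le.trans ?_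
    have h1 : ((-1 : Polynomial F) ^ (p + 1)).natDegree ≤ 0 :=
      Polynomial.natDegree_pow_le.trans (by simp)
    have h2 : ((-1 : Polynomial F) ^ (p + 1) * (m.choose p : Polynomial F)).natDegree ≤ 0 :=
      Polynomial.natDegree_mul_le.trans (by simp [Polynomial.natDegree_natCast])
    have h3 : f.natDegree = m := by rw [hf, rx_natDegree, Finset.card_univ, Fintype.card_fin]
    omega
  have hsub : sylv A B p q
      - ((-1 : Polynomial F) ^ (p + 1) * (m.choose p : Polynomial F) * f) = 0 := by
    apply Polynomial.eq_zero_of_natDegree_lt_card_of_eval_eq_zero' _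
      ((univ : Finset (Fin (m + 2))).image B)
    · intro y hy
      obtain ⟨j, -, rfl⟩ := Finset.mem_image.1 hy
      rw [eval_sub, sub_eq_zero, heval j, hf]
      simp [eval_mul, eval_pow]
    · have hcard : ((univ : Finset (Fin (m + 2))).image B).card = m + 2 := by
        rw [Finset.card_image_of_injective _ hB, Finset.card_univ, Fintype.card_fin]
      refine lt_of_le_of_lt ((Polynomial.natDegree_sub_le _ _).trans (max_le hdeg1 hdeg2)) ?_
      rw [hcard]
      omega
  exact sub_eq_zero.1 hsub
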